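/- Let h : [0,∞) → [0,∞) be nondecreasing and continuous with lim_{ζ→∞} h(ζ) = ∞, let g(ζ) = ∫₀^ζ h(ζ') dζ', and let Φ₀ > 0. Then there exists a continuous function φ : (0,1] → [0,∞), depending only on h and Φ₀, with lim_{r↓0} φ(r) = 0, such that for every t ∈ (0,1], every bounded Borel measurable ζ : [0,t] → [0,∞) with ∫₀ᵗ ζ(v) dv ≤ Φ₀, and every r ∈ (0,t], one has ∫₀ʳ exp( −∫₀ᵛ g(ζ(v')) dv' )·ζ(v) dv ≤ φ(r). -/

import Mathlib

set_option maxHeartbeats 1000000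

open MeasureTheory Set intervalIntegral Finset

private lemma zmono (ξ : ℝ → ℝ) (h0 : ∀ x, 0 ≤ ξ x) (hi : Integrable ξ) :
    Monotone (fun v => ∫ x in (0:ℝ)..v, ξ x) := by
  intro a b hab
  have : (∫ x in (0:ℝ)..b, ξ x) - ∫ x in (0:ℝ)..a, ξ x = ∫ x in a..b, ξ x := by
    rw [← intervalIntegral.integral_add_adjacent_intervals (a := 0) (b := a) (c := b)
      hi.intervalIntegrable hi.intervalIntegrable]; ring
  have hpos : 0 ≤ ∫ x in a..b, ξ x :=
    intervalIntegral.integral_nonneg hab (fun x _ => h0 x)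
  linarith

private lemma sublevel (ξ : ℝ → ℝ) (hm : Measurable ξ) (h0 : ∀ x, 0 ≤ ξ x)
    (hi : Integrable ξ) (r y : ℝ) (hr : 0 ≤ r) (hy : 0 < y) :
    (∫ v in (0:ℝ)..r, (if (∫ x in (0:ℝ)..v, ξ x) < y then ξ v else 0)) ≤ y := by
  set Z : ℝ → ℝ := fun v => ∫ x in (0:ℝ)..v, ξ x with hZ
  have zc : Continuous Z := hi.continuous_primitive 0
  have zm : Monotone Z := zmono ξ h0 hi
  have z0 : Z 0 = 0 := intervalIntegral.integral_same
  set S : Set ℝ := insert 0 {v ∈ Icc 0 r | Z v < y} with hS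
  have hSne : S.Nonempty := ⟨0, mem_insert _ _⟩
  have hSbdd : BddAbove S := by
    refine ⟨r, ?_⟩
    rintro v (rfl | ⟨⟨_, hv2⟩, _⟩)
    · exact hr
    · exact hv2
  set s := sSup S with hs
  have hs0 : 0 ≤ s := le_csSup hSbdd (mem_insert _ _)
  have hsr : s ≤ r := csSup_le hSne (by rintro v (rfl | ⟨⟨_, hv2⟩, _⟩) <;> [exact hr; exact hv2])
  have hSlt : ∀ v ∈ S, Z v < y := by
    rintro v (rfl | ⟨_, hv2⟩)
    · rw [z0]; exact hy
    · exact hv2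
  have hZs : Z s ≤ y := by
    by_contra hlt
    push_neg at hlt
    have hc := (zc.continuousAt (x := s)).tendsto
    have : ∀ᶠ u in nhds s, y < Z u := hc.eventually (eventually_gt_nhds hlt)
    obtain ⟨δ, hδ, hball⟩ := Metric.eventually_nhds_iff.mp this
    have hub : ∀ v ∈ S, v ≤ s - δ/2 := by
      intro v hv
      by_contra hvgt
      push_neg at hvgt
      have hvs : v ≤ s := le_csSup hSbdd hv
      have : dist v s < δ := by
        rw [Real.dist_eq, abs_of_nonpos (by linarith)]
        linarith
      exact absurd (hball this) (not_lt.mpr (hSlt v hv).le)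
    have : s ≤ s - δ/2 := csSup_le hSne hub
    linarith
  -- integral bound
  have hint1 : IntervalIntegrable (fun v => if Z v < y then ξ v else 0) volume 0 r := by
    have : Measurable (fun v => if Z v < y then ξ v else 0) := by
      exact Measurable.ite (measurableSet_lt zc.measurable measurable_const) hm measurable_const
    refine (hi.mono' this.aestronglyMeasurable ?_).intervalIntegrable
    filter_upwards with v
    by_cases hv : Z v < y <;> simp [hv, abs_of_nonneg (h0 v), h0 v]
  have hint2 : IntervalIntegrable (fun v => Set.indicator (Iic s) ξ v) volume 0 r := by
    have : Measurable (fun v => Set.indicator (Iic s) ξ v) := (hm.indicator measurableSet_Iic)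
    refine (hi.mono' this.aestronglyMeasurable ?_).intervalIntegrable
    filter_upwards with v
    by_cases hv : v ∈ Iic s <;> simp [Set.indicator_apply, hv, abs_of_nonneg (h0 v), h0 v]
  have hmono : ∀ v ∈ Icc (0:ℝ) r, (if Z v < y then ξ v else 0) ≤ Set.indicator (Iic s) ξ v := by
    intro v hv
    by_cases hvy : Z v < y
    · have : v ∈ S := mem_insert_iff.mpr (Or.inr ⟨hv, hvy⟩)
      have : v ≤ s := le_csSup hSbdd this
      simp [hvy, Set.indicator_apply, Set.mem_Iic.mpr this]
    · simp only [hvy, if_false]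
      exact Set.indicator_nonneg (fun x _ => h0 x) v
  calc (∫ v in (0:ℝ)..r, (if Z v < y then ξ v else 0))
      ≤ ∫ v in (0:ℝ)..r, Set.indicator (Iic s) ξ v :=
        intervalIntegral.integral_mono_on hr hint1 hint2 hmono
    _ = ∫ v in (0:ℝ)..s, ξ v := by
        rw [intervalIntegral.integral_of_le hr, intervalIntegral.integral_of_le hs0]
        rw [← MeasureTheory.integral_indicator measurableSet_Ioc,
            ← MeasureTheory.integral_indicator measurableSet_Ioc]
        congr 1
        ext v
        by_cases h1 : v ∈ Ioc (0:ℝ) s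
        · have : v ∈ Ioc (0:ℝ) r := ⟨h1.1, le_trans h1.2 hsr⟩
          simp [Set.indicator_apply, h1, this, Set.mem_Iic.mpr h1.2]
        · by_cases h2 : v ∈ Ioc (0:ℝ) r
          · have : ¬ v ∈ Iic s := by
              simp only [Set.mem_Ioc, not_and_or, not_le, not_lt] at h1 ⊢
              rcases h1 with h1 | h1
              · exact absurd h2.1 (not_lt.mpr h1)
              · exact not_le.mpr h1
            simp [Set.indicator_apply, h1, h2, this]
          · simp [Set.indicator_apply, h1, h2]
    _ ≤ y := le_trans (le_of_eq rfl) hZs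

private lemma scalar_step (c B x : ℝ) (hc : 0 < c) (hx : 0 ≤ x) (hxB : x ≤ B) :
    Real.exp (-(c*x)) ≤ Real.exp (-((Nat.ceil (c*B) : ℝ) + 1)) +
      ∑ k ∈ Finset.range (Nat.ceil (c*B) + 1),
        (1 - Real.exp (-1)) * Real.exp (-1) ^ k * (if x < ((k:ℝ)+1)/c then 1 else 0) := by
  set N := Nat.ceil (c*B) with hN
  set q := Real.exp (-1) with hq
  have hq0 : 0 < q := Real.exp_pos _
  have hq1 : q < 1 := by
    rw [hq]; exact Real.exp_lt_one_iff.mpr (by norm_num)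
  set m := Nat.floor (c*x) with hm
  have hmN : m ≤ N := le_trans (Nat.floor_mono (by nlinarith)) (Nat.floor_le_ceil _)
  have hterm : ∀ k : ℕ, 0 ≤ (1 - q) * q ^ k * (if x < ((k:ℝ)+1)/c then 1 else 0) := by
    intro k
    have h3 : (0:ℝ) ≤ (1-q) * q^k := mul_nonneg (by linarith) (pow_nonneg hq0.le _)
    by_cases hk : x < ((k:ℝ)+1)/c <;> simp [hk, h3]
  have hind : ∀ k ∈ Finset.Ico m (N+1), (1 - q) * q ^ k * (if x < ((k:ℝ)+1)/c then 1 else 0)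
      = (1-q) * q ^ k := by
    intro k hk
    have hk1 : m ≤ k := (Finset.mem_Ico.mp hk).1
    have h4 : c * x < (k:ℝ) + 1 := by
      have h1 : c * x < (m:ℝ) + 1 := Nat.lt_floor_add_one _
      have h2 : (m:ℝ) ≤ k := Nat.cast_le.mpr hk1
      linarith
    have : x < ((k:ℝ)+1)/c := (lt_div_iff₀ hc).mpr (by linarith)
    simp [this]
  have hsub : Finset.Ico m (N+1) ⊆ Finset.range (N+1) := by
    intro k hk; exact Finset.mem_range.mpr (Finset.mem_Ico.mp hk).2
  have hge : ∑ k ∈ Finset.Ico m (N+1), (1-q) * q ^ k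
      ≤ ∑ k ∈ Finset.range (N+1), (1 - q) * q ^ k * (if x < ((k:ℝ)+1)/c then 1 else 0) := by
    rw [← Finset.sum_congr rfl hind]
    exact Finset.sum_le_sum_of_subset_of_nonneg hsub (fun k _ _ => hterm k)
  have h1 : ∀ n : ℕ, ∑ k ∈ Finset.range n, (1-q)*q^k = 1 - q^n := by
    intro n
    induction n with
    | zero => simp
    | succ n ih => rw [Finset.sum_range_succ, ih]; ring
  have hgeom : ∑ k ∈ Finset.Ico m (N+1), (1-q) * q ^ k = q ^ m - q ^ (N+1) := by
    rw [Finset.sum_Ico_eq_sub _ (hmN.trans (Nat.le_succ N)), h1, h1, pow_succ]; ring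
  have hkey : q ^ m ≥ Real.exp (-(c*x)) := by
    have : (q:ℝ) ^ m = Real.exp (-(m:ℝ)) := by
      rw [hq, ← Real.exp_nat_mul]; ring_nf
    rw [this]
    exact Real.exp_le_exp.mpr (by simpa using Nat.floor_le (by positivity : 0 ≤ c*x))
  have hN1 : q ^ (N+1) = Real.exp (-((N:ℝ)+1)) := by
    rw [hq, ← Real.exp_nat_mul]; push_cast; ring_nf
  linarith [hge, hgeom, hkey, hN1.ge, hN1.le]

private lemma core (c r : ℝ) (hc : 0 < c) (hr : 0 ≤ r) (ξ : ℝ → ℝ) (hm : Measurable ξ)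
    (h0 : ∀ x, 0 ≤ ξ x) (hi : Integrable ξ) :
    (∫ v in (0:ℝ)..r, Real.exp (-(c * ∫ x in (0:ℝ)..v, ξ x)) * ξ v) ≤ 3 / c := by
  set Z : ℝ → ℝ := fun v => ∫ x in (0:ℝ)..v, ξ x with hZdef
  have zc : Continuous Z := hi.continuous_primitive 0
  have zm : Monotone Z := zmono ξ h0 hi
  have z0 : Z 0 = 0 := intervalIntegral.integral_same
  set B := Z r with hB
  have hB0 : 0 ≤ B := by rw [hB, ← z0]; exact zm hr
  set N := Nat.ceil (c*B) with hN
  set q := Real.exp (-1) with hq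
  have hq0 : 0 < q := Real.exp_pos _
  have hq1 : q < 1 := Real.exp_lt_one_iff.mpr (by norm_num)
  have hqhalf : q ≤ 1/2 := by
    have h2 : (2:ℝ) ≤ Real.exp 1 := by
      have := Real.exp_one_gt_d9; linarith
    have hee : q * Real.exp 1 = 1 := by
      rw [hq, ← Real.exp_add]; simp
    nlinarith [Real.exp_pos 1]
  -- integrability facts
  have hmA : Measurable (fun v => Real.exp (-(c * Z v)) * ξ v) := by
    exact ((Real.continuous_exp.comp ((continuous_const.mul zc).neg)).measurable).mul hm
  have hAint : IntervalIntegrable (fun v => Real.exp (-(c * Z v)) * ξ v) volume 0 r := by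
    rw [intervalIntegrable_iff_integrableOn_Ioc_of_le hr]
    refine (hi.integrableOn).mono' hmA.aestronglyMeasurable ?_
    filter_upwards [ae_restrict_mem measurableSet_Ioc] with v hv
    have hz : 0 ≤ Z v := by rw [← z0]; exact zm hv.1.le
    rw [Real.norm_eq_abs, abs_mul, abs_of_nonneg (h0 v),
      abs_of_nonneg (Real.exp_pos _).le]
    have : Real.exp (-(c * Z v)) ≤ 1 := Real.exp_le_one_iff.mpr (by nlinarith)
    nlinarith [h0 v]
  have hind_int : ∀ y : ℝ, IntervalIntegrable (fun v => if Z v < y then ξ v else 0) volume 0 r := by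
    intro y
    have hmes : Measurable (fun v => if Z v < y then ξ v else 0) :=
      Measurable.ite (measurableSet_lt zc.measurable measurable_const) hm measurable_const
    refine (hi.mono' hmes.aestronglyMeasurable ?_).intervalIntegrable
    filter_upwards with v
    by_cases hv : Z v < y <;> simp [hv, abs_of_nonneg (h0 v), h0 v]
  have hsumint : IntervalIntegrable (fun v =>
      ∑ k ∈ Finset.range (N+1), (1-q) * q^k * (if Z v < ((k:ℝ)+1)/c then ξ v else 0))
      volume 0 r := by
    have hfe : (fun v => ∑ k ∈ Finset.range (N+1),
          (1-q) * q^k * (if Z v < ((k:ℝ)+1)/c then ξ v else 0))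
        = ∑ k ∈ Finset.range (N+1),
            (fun v => (1-q) * q^k * (if Z v < ((k:ℝ)+1)/c then ξ v else 0)) := by
      funext v; simp
    rw [hfe]
    exact IntervalIntegrable.sum _ (fun k _ => (hind_int _).const_mul _)
  have hRHSint : IntervalIntegrable (fun v => Real.exp (-((N:ℝ)+1)) * ξ v +
      ∑ k ∈ Finset.range (N+1), (1-q) * q^k * (if Z v < ((k:ℝ)+1)/c then ξ v else 0))
      volume 0 r :=
    IntervalIntegrable.add (hi.intervalIntegrable.const_mul _) hsumint
  -- pointwise bound
  have hpt : ∀ v ∈ Icc (0:ℝ) r, Real.exp (-(c * Z v)) * ξ v ≤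
      Real.exp (-((N:ℝ)+1)) * ξ v +
      ∑ k ∈ Finset.range (N+1), (1-q) * q^k * (if Z v < ((k:ℝ)+1)/c then ξ v else 0) := by
    intro v hv
    have hz0 : 0 ≤ Z v := by rw [← z0]; exact zm hv.1
    have hzB : Z v ≤ B := zm hv.2
    have := mul_le_mul_of_nonneg_right (scalar_step c B (Z v) hc hz0 hzB) (h0 v)
    calc Real.exp (-(c * Z v)) * ξ v ≤ _ := this
      _ = _ := by
          rw [add_mul, Finset.sum_mul]
          congr 1
          refine Finset.sum_congr rfl (fun k _ => ?_)
          by_cases hk : Z v < ((k:ℝ)+1)/c <;> simp [hk, hq]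
  -- integrate
  have hint : (∫ v in (0:ℝ)..r, Real.exp (-(c * Z v)) * ξ v) ≤
      Real.exp (-((N:ℝ)+1)) * B +
      ∑ k ∈ Finset.range (N+1), (1-q) * q^k * (((k:ℝ)+1)/c) := by
    calc (∫ v in (0:ℝ)..r, Real.exp (-(c * Z v)) * ξ v)
        ≤ ∫ v in (0:ℝ)..r, (Real.exp (-((N:ℝ)+1)) * ξ v +
            ∑ k ∈ Finset.range (N+1), (1-q) * q^k * (if Z v < ((k:ℝ)+1)/c then ξ v else 0)) :=
          intervalIntegral.integral_mono_on hr hAint hRHSint hpt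
      _ = Real.exp (-((N:ℝ)+1)) * B +
            ∑ k ∈ Finset.range (N+1), (1-q) * q^k *
              (∫ v in (0:ℝ)..r, (if Z v < ((k:ℝ)+1)/c then ξ v else 0)) := by
          rw [intervalIntegral.integral_add (hi.intervalIntegrable.const_mul _) hsumint,
            intervalIntegral.integral_const_mul,
            intervalIntegral.integral_finset_sum (fun k _ => (hind_int _).const_mul _)]
          congr 1
          exact Finset.sum_congr rfl (fun k _ => intervalIntegral.integral_const_mul _ _)
      _ ≤ _ := by
          refine add_le_add_right (Finset.sum_le_sum (fun k _ => ?_)) _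
          refine mul_le_mul_of_nonneg_left ?_ (mul_nonneg (by linarith) (pow_nonneg hq0.le _))
          exact sublevel ξ hm h0 hi r _ hr (by positivity)
  -- tail bounds
  have hT1 : Real.exp (-((N:ℝ)+1)) * B ≤ 1/c := by
    have hcb : c*B ≤ (N:ℝ)+1 := le_trans (Nat.le_ceil _) (by linarith)
    have he1 : Real.exp (-((N:ℝ)+1)) ≤ Real.exp (-(c*B)) := Real.exp_le_exp.mpr (by linarith)
    have he2 : c*B ≤ Real.exp (c*B) := by linarith [Real.add_one_le_exp (c*B)]
    have hee : Real.exp (-(c*B)) * Real.exp (c*B) = 1 := by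
      rw [← Real.exp_add]; simp
    have he3 : c * B * Real.exp (-(c*B)) ≤ 1 := by
      nlinarith [Real.exp_pos (-(c*B))]
    rw [le_div_iff₀ hc]
    nlinarith [mul_le_mul_of_nonneg_right he1 (mul_nonneg hB0 hc.le)]
  have hT2 : ∑ k ∈ Finset.range (N+1), (1-q) * q^k * (((k:ℝ)+1)/c) ≤ 2/c := by
    have h1 : Summable (fun n : ℕ => (n:ℝ) * q^n) := by
      have := summable_pow_mul_geometric_of_norm_lt_one (R := ℝ) 1
        (r := q) (by rw [Real.norm_eq_abs, abs_of_pos hq0]; exact hq1)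
      simpa using this
    have h2 : Summable (fun n : ℕ => q^n) := summable_geometric_of_lt_one hq0.le hq1
    have hsum : Summable (fun k : ℕ => (1-q) * q^k * (((k:ℝ)+1)/c)) := by
      have : (fun k : ℕ => (1-q) * q^k * (((k:ℝ)+1)/c))
          = fun k : ℕ => ((1-q)/c) * ((k:ℝ) * q^k) + ((1-q)/c) * q^k := by
        funext k; field_simp
      rw [this]
      exact ((h1.mul_left _).add (h2.mul_left _))
    have hts : ∑' k : ℕ, ((1-q)/c * ((k:ℝ) * q^k) + (1-q)/c * q^k)
        = (1-q)/c * (q/(1-q)^2) + (1-q)/c * (1-q)⁻¹ := by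
      rw [Summable.tsum_add (h1.mul_left _) (h2.mul_left _), tsum_mul_left, tsum_mul_left,
        tsum_coe_mul_geometric_of_norm_lt_one
          (by rw [Real.norm_eq_abs, abs_of_pos hq0]; exact hq1),
        tsum_geometric_of_lt_one hq0.le hq1]
    have hle : ∑ k ∈ Finset.range (N+1), (1-q) * q^k * (((k:ℝ)+1)/c)
        ≤ ∑' k : ℕ, ((1-q)/c * ((k:ℝ) * q^k) + (1-q)/c * q^k) := by
      have heq : ∀ k : ℕ, (1-q) * q^k * (((k:ℝ)+1)/c)
          = (1-q)/c * ((k:ℝ) * q^k) + (1-q)/c * q^k := by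
        intro k; field_simp
      calc ∑ k ∈ Finset.range (N+1), (1-q) * q^k * (((k:ℝ)+1)/c)
          = ∑ k ∈ Finset.range (N+1), ((1-q)/c * ((k:ℝ) * q^k) + (1-q)/c * q^k) :=
            Finset.sum_congr rfl (fun k _ => heq k)
        _ ≤ _ := by
            have hterm0 : ∀ i : ℕ, 0 ≤ (1-q)/c * ((i:ℝ) * q^i) + (1-q)/c * q^i := by
              intro i
              have h1q : (0:ℝ) ≤ (1-q)/c := div_nonneg (by linarith) hc.le
              have hp := pow_nonneg hq0.le i
              exact add_nonneg (mul_nonneg h1q (mul_nonneg (Nat.cast_nonneg i) hp))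
                (mul_nonneg h1q hp)
            exact Summable.sum_le_tsum _ (fun i _ => hterm0 i) ((h1.mul_left _).add (h2.mul_left _))
    rw [hts] at hle
    have hne : (1:ℝ) - q ≠ 0 := by linarith
    have hval : (1-q)/c * (q/(1-q)^2) + (1-q)/c * (1-q)⁻¹ = (1/(1-q))/c := by
      field_simp
      ring
    rw [hval] at hle
    have h2' : 1/(1-q) ≤ 2 := by
      rw [div_le_iff₀ (by linarith)]; linarith
    have : (1/(1-q))/c ≤ 2/c := by gcongr
    linarith
  have hfin : Real.exp (-((N:ℝ)+1)) * B +
      ∑ k ∈ Finset.range (N+1), (1-q) * q^k * (((k:ℝ)+1)/c) ≤ 3/c := by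
    rw [show (3:ℝ)/c = 1/c + 2/c by ring]
    exact add_le_add hT1 hT2
  exact le_trans hint hfin

/-- Lemma 7 of the paper: if `h` is nondecreasing, continuous,
nonnegative on `[0,∞)` with `h(ζ) → ∞`, and `g(ζ) = ∫₀^ζ h`, then there is a
continuous function `φ : (0,1] → [0,∞)` with `φ(r) → 0` as `r ↓ 0`, depending only
on `h` and `Φ₀`, such that for every admissible strategy `ζ` with total sales at
most `Φ₀`, the impact-discounted sales up to time `r` are bounded by `φ(r)`. -/
theorem discounted_sales_uniform_bound (Φ₀ : ℝ) (hΦ₀ : 0 < Φ₀) (h : ℝ → ℝ)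
    (hmono : MonotoneOn h (Set.Ici 0)) (hcont : ContinuousOn h (Set.Ici 0))
    (hnonneg : ∀ x ≥ (0 : ℝ), 0 ≤ h x)
    (htop : Filter.Tendsto h Filter.atTop Filter.atTop)
    (g : ℝ → ℝ) (hg : ∀ ζ : ℝ, g ζ = ∫ x in (0 : ℝ)..ζ, h x) :
    ∃ φ : ℝ → ℝ, ContinuousOn φ (Set.Ioc 0 1) ∧
      (∀ r ∈ Set.Ioc (0 : ℝ) 1, 0 ≤ φ r) ∧
      Filter.Tendsto φ (nhdsWithin 0 (Set.Ioi 0)) (nhds 0) ∧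
      ∀ t ∈ Set.Ioc (0 : ℝ) 1, ∀ ζ : ℝ → ℝ, Measurable ζ →
        (∃ M : ℝ, ∀ v ∈ Set.Icc (0 : ℝ) t, ζ v ≤ M) →
        (∀ v ∈ Set.Icc (0 : ℝ) t, 0 ≤ ζ v) →
        (∫ v in (0 : ℝ)..t, ζ v) ≤ Φ₀ →
        ∀ r ∈ Set.Ioc (0 : ℝ) t,
          (∫ v in (0 : ℝ)..r,
              Real.exp (-(∫ x in (0 : ℝ)..v, g (ζ x))) * ζ v) ≤ φ r := by
  classical
  -- continuous extension of h
  set hE : ℝ → ℝ := fun x => h (max x 0) with hhE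
  have hEc : Continuous hE :=
    hcont.comp_continuous (continuous_id.max continuous_const) (fun x => le_max_right x 0)
  have hEnn : ∀ x, 0 ≤ hE x := fun x => hnonneg _ (le_max_right x 0)
  have hEeq : ∀ x ≥ (0:ℝ), hE x = h x := fun x hx => by rw [hhE]; simp [max_eq_left hx]
  have hEmono : Monotone hE := fun x y hxy =>
    hmono (le_max_right x 0) (le_max_right y 0) (max_le_max hxy le_rfl)
  -- the primitive H
  set H : ℝ → ℝ := fun y => ∫ x in (0:ℝ)..y, hE x with hHdef
  have HC : Continuous H :=
    intervalIntegral.continuous_primitive (fun a b => hEc.intervalIntegrable a b) 0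
  have Hmono : Monotone H := by
    intro a b hab
    have hsplit : H a + (∫ x in a..b, hE x) = H b :=
      intervalIntegral.integral_add_adjacent_intervals (hEc.intervalIntegrable 0 a)
        (hEc.intervalIntegrable a b)
    have : 0 ≤ ∫ x in a..b, hE x := intervalIntegral.integral_nonneg hab (fun x _ => hEnn x)
    linarith
  have H0 : H 0 = 0 := intervalIntegral.integral_same
  have Hnn : ∀ y, 0 ≤ y → 0 ≤ H y := fun y hy => H0 ▸ Hmono hy
  have Hg : ∀ y ≥ (0:ℝ), g y = H y := by
    intro y hy
    rw [hg y, hHdef]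
    refine intervalIntegral.integral_congr (fun x hx => ?_)
    rw [uIcc_of_le hy] at hx
    exact (hEeq x hx.1).symm
  have Hlb : ∀ K, 0 ≤ K → ∀ y, 0 ≤ y → h K * (y - K) ≤ H y := by
    intro K hK y hy
    rcases le_or_gt K y with hKy | hKy
    · have hsplit : H K + (∫ x in K..y, hE x) = H y :=
        intervalIntegral.integral_add_adjacent_intervals (hEc.intervalIntegrable 0 K)
          (hEc.intervalIntegrable K y)
      have hlow : (∫ x in K..y, (h K)) ≤ ∫ x in K..y, hE x := by
        refine intervalIntegral.integral_mono_on hKy intervalIntegrable_const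
          (hEc.intervalIntegrable K y) (fun x hx => ?_)
        rw [← hEeq K hK]
        exact hEmono hx.1
      rw [intervalIntegral.integral_const, smul_eq_mul] at hlow
      have := Hnn K hK
      nlinarith
    · have h1 : 0 ≤ h K := hnonneg K hK
      have h2 : 0 ≤ H y := Hnn y hy
      nlinarith
  -- admissible thresholds
  set T : Set ℝ := {K : ℝ | 0 ≤ K ∧ 0 < h K} with hT
  have hTne : T.Nonempty := by
    obtain ⟨a, ha⟩ := (htop.eventually_ge_atTop 1).exists_forall_of_atTop
    exact ⟨max a 0, le_max_right a 0,
      lt_of_lt_of_le one_pos (le_trans (le_max_right 1 1) (by simpa [max_comm] using ha _ (le_max_left a 0)))⟩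
  -- the envelope ψ
  set ψ : ℝ → ℝ := fun s => sInf ((fun K => 3 * Real.exp (h K * K * s) / h K) '' T) with hψ
  have himgne : ∀ s : ℝ, ((fun K => 3 * Real.exp (h K * K * s) / h K) '' T).Nonempty :=
    fun s => hTne.image _
  have himgnn : ∀ s : ℝ, ∀ b ∈ ((fun K => 3 * Real.exp (h K * K * s) / h K) '' T), 0 ≤ b := by
    rintro s b ⟨K, ⟨hK0, hKp⟩, rfl⟩
    positivity
  have himgbdd : ∀ s : ℝ, BddBelow ((fun K => 3 * Real.exp (h K * K * s) / h K) '' T) :=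
    fun s => ⟨0, fun b hb => himgnn s b hb⟩
  have hψnn : ∀ s, 0 ≤ ψ s := fun s => le_csInf (himgne s) (himgnn s)
  have hψle : ∀ s : ℝ, ∀ K ∈ T, ψ s ≤ 3 * Real.exp (h K * K * s) / h K :=
    fun s K hK => csInf_le (himgbdd s) ⟨K, hK, rfl⟩
  have hψmono : Monotone ψ := by
    intro s₁ s₂ hs
    refine le_csInf (himgne s₂) ?_
    rintro b ⟨K, hK, rfl⟩
    refine le_trans (hψle s₁ K hK) ?_
    have hc : 0 < h K := hK.2
    have : Real.exp (h K * K * s₁) ≤ Real.exp (h K * K * s₂) :=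
      Real.exp_le_exp.mpr (mul_le_mul_of_nonneg_left hs (mul_nonneg hc.le hK.1))
    exact (div_le_div_iff_of_pos_right hc).mpr (by linarith)
  -- smoothed version
  set ψm : ℝ → ℝ := fun s => ψ (min s 1) with hψm
  have hψmmono : Monotone ψm := hψmono.comp (monotone_id.min monotone_const)
  have hψmint : ∀ a b : ℝ, IntervalIntegrable ψm volume a b :=
    fun a b => hψmmono.intervalIntegrable
  set Ψ : ℝ → ℝ := fun u => ∫ s in (0:ℝ)..u, ψm s with hΨ
  have hΨc : Continuous Ψ := intervalIntegral.continuous_primitive hψmint 0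
  set φ : ℝ → ℝ := fun r => (Ψ (2*r) - Ψ r) / r with hφ
  have hφint : ∀ r : ℝ, Ψ (2*r) - Ψ r = ∫ s in r..(2*r), ψm s := by
    intro r
    have := intervalIntegral.integral_add_adjacent_intervals (hψmint 0 r) (hψmint r (2*r))
    rw [hΨ]; dsimp only; linarith [this]
  have hφnn : ∀ r : ℝ, 0 < r → 0 ≤ φ r := by
    intro r hr
    rw [hφ]; dsimp only
    rw [hφint r]
    apply div_nonneg ?_ hr.le
    exact intervalIntegral.integral_nonneg (by linarith) (fun s _ => hψnn _)
  have hφlb : ∀ r : ℝ, 0 < r → r ≤ 1 → ψ r ≤ φ r := by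
    intro r hr hr1
    rw [hφ]; dsimp only
    rw [hφint r, le_div_iff₀ hr]
    have hpt : ∀ s ∈ Icc r (2*r), ψ r ≤ ψm s := by
      intro s hs
      exact hψmono (le_min hs.1 hr1)
    calc ψ r * r = (2*r - r) • ψ r := by rw [smul_eq_mul]; ring
      _ = ∫ _ in r..(2*r), ψ r := (intervalIntegral.integral_const _).symm
      _ ≤ ∫ s in r..(2*r), ψm s :=
          intervalIntegral.integral_mono_on (by linarith) intervalIntegrable_const
            (hψmint r (2*r)) hpt
  have hφub : ∀ r : ℝ, 0 < r → φ r ≤ ψm (2*r) := by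
    intro r hr
    rw [hφ]; dsimp only
    rw [hφint r, div_le_iff₀ hr]
    have hpt : ∀ s ∈ Icc r (2*r), ψm s ≤ ψm (2*r) := fun s hs => hψmmono hs.2
    calc (∫ s in r..(2*r), ψm s) ≤ ∫ _ in r..(2*r), ψm (2*r) :=
          intervalIntegral.integral_mono_on (by linarith) (hψmint r (2*r))
            intervalIntegrable_const hpt
      _ = (2*r - r) • ψm (2*r) := intervalIntegral.integral_const _
      _ = ψm (2*r) * r := by rw [smul_eq_mul]; ring
  -- the limit
  have hφtend : Filter.Tendsto φ (nhdsWithin 0 (Set.Ioi 0)) (nhds 0) := by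
    rw [Metric.tendsto_nhdsWithin_nhds]
    intro ε hε
    obtain ⟨a, ha⟩ := (htop.eventually_ge_atTop (max (9/ε) 1)).exists_forall_of_atTop
    set K := max a 0 with hK
    have hKT : K ∈ T := ⟨le_max_right a 0,
      lt_of_lt_of_le one_pos ((le_max_right (9/ε) 1).trans (ha K (le_max_left a 0)))⟩
    set c := h K with hc
    have hc9 : 9/ε ≤ c := (le_max_left (9/ε) 1).trans (ha K (le_max_left a 0))
    have hcp : 0 < c := hKT.2
    refine ⟨1/(2*(c*K+1)), by positivity, ?_⟩
    intro r hrI hrd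
    have hr : 0 < r := hrI
    rw [Real.dist_eq, sub_zero, abs_of_pos hr] at hrd
    rw [Real.dist_eq, sub_zero, abs_of_nonneg (hφnn r hr)]
    have hb1 : φ r ≤ ψ (min (2*r) 1) := hφub r hr
    have hb2 : ψ (min (2*r) 1) ≤ 3 * Real.exp (c * K * min (2*r) 1) / c :=
      hψle _ K hKT
    have hcK : c * K * min (2*r) 1 ≤ 1 := by
      have hm2 : min (2*r) 1 ≤ 2*r := min_le_left _ _
      have hm0 : 0 ≤ min (2*r) 1 := le_min (by linarith) one_pos.le
      have h2r : 2*r ≤ 1/(c*K+1) := by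
        rw [le_div_iff₀ (by positivity)]
        have h' := (lt_div_iff₀ (by positivity : (0:ℝ) < 2*(c*K+1))).mp hrd
        nlinarith [h']
      have hcknn : 0 ≤ c*K := mul_nonneg hcp.le hKT.1
      have : c*K * min (2*r) 1 ≤ c*K * (1/(c*K+1)) :=
        mul_le_mul_of_nonneg_left (hm2.trans h2r) hcknn
      refine this.trans ?_
      rw [mul_one_div, div_le_one (by positivity)]
      linarith
    have hexp : Real.exp (c * K * min (2*r) 1) ≤ Real.exp 1 := Real.exp_le_exp.mpr hcK
    have he3 : Real.exp 1 < 3 := by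
      have := Real.exp_one_lt_d9; linarith
    have : 3 * Real.exp (c * K * min (2*r) 1) / c < ε := by
      rw [div_lt_iff₀ hcp]
      have h9 : 9 ≤ ε * c := by
        rw [← div_le_iff₀' hε]; exact hc9
      nlinarith [Real.exp_pos (c * K * min (2*r) 1)]
    linarith
  refine ⟨φ, ?_, ?_, hφtend, ?_⟩
  · rw [hφ]
    refine ContinuousOn.div ?_ continuousOn_id (fun r hr => ne_of_gt hr.1)
    exact ((hΨc.comp (continuous_const.mul continuous_id)).sub hΨc).continuousOn
  · exact fun r hr => hφnn r hr.1
  · intro t ht ζ hζm hζM hζ0 hζΦ r hrmem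
    obtain ⟨M, hM⟩ := hζM
    obtain ⟨hr0, hrt⟩ := hrmem
    have hrt1 : r ≤ 1 := hrt.trans ht.2
    refine le_trans ?_ (hφlb r hr0 hrt1)
    rw [hψ]; dsimp only
    refine le_csInf (himgne r) ?_
    rintro b ⟨K, ⟨hK0, hKp⟩, rfl⟩
    set c := h K with hcdef
    set ξ : ℝ → ℝ := (Set.Icc (0:ℝ) t).indicator ζ with hξ
    have hξm : Measurable ξ := hζm.indicator measurableSet_Icc
    have hξ0 : ∀ x, 0 ≤ ξ x := by
      intro x
      rw [hξ]
      by_cases hx : x ∈ Set.Icc (0:ℝ) t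
      · rw [Set.indicator_of_mem hx]; exact hζ0 x hx
      · rw [Set.indicator_of_notMem hx]
    set M' := max M 0 with hM'
    have hξub : ∀ x, ξ x ≤ M' := by
      intro x; rw [hξ]
      by_cases hx : x ∈ Set.Icc (0:ℝ) t
      · rw [Set.indicator_of_mem hx]; exact (hM x hx).trans (le_max_left _ _)
      · rw [Set.indicator_of_notMem hx]; exact le_max_right _ _
    have hξi : Integrable ξ := by
      rw [hξ, integrable_indicator_iff measurableSet_Icc]
      refine Integrable.mono' (g := fun _ => M')
        (integrableOn_const measure_Icc_lt_top.ne)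
        hζm.aestronglyMeasurable.restrict ?_
      filter_upwards [ae_restrict_mem measurableSet_Icc] with x hx
      rw [Real.norm_eq_abs, abs_of_nonneg (hζ0 x hx)]
      exact (hM x hx).trans (le_max_left _ _)
    have hHξi : Integrable (fun x => H (ξ x)) := by
      have heq : (fun x => H (ξ x)) = (Set.Icc (0:ℝ) t).indicator (fun x => H (ζ x)) := by
        funext x
        by_cases hx : x ∈ Set.Icc (0:ℝ) t
        · rw [Set.indicator_of_mem hx, hξ, Set.indicator_of_mem hx]
        · rw [Set.indicator_of_notMem hx, hξ, Set.indicator_of_notMem hx, H0]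
      rw [heq, integrable_indicator_iff measurableSet_Icc]
      refine Integrable.mono' (g := fun _ => H M')
        (integrableOn_const measure_Icc_lt_top.ne)
        ((HC.measurable.comp hζm).aestronglyMeasurable.restrict) ?_
      filter_upwards [ae_restrict_mem measurableSet_Icc] with x hx
      rw [Real.norm_eq_abs, abs_of_nonneg (Hnn _ (hζ0 x hx))]
      exact Hmono ((hM x hx).trans (le_max_left _ _))
    set G1 : ℝ → ℝ := fun v => ∫ x in (0:ℝ)..v, H (ξ x) with hG1
    have hG1c : Continuous G1 := hHξi.continuous_primitive 0
    have hG1nn : ∀ v, 0 ≤ v → 0 ≤ G1 v := fun v hv =>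
      intervalIntegral.integral_nonneg hv (fun x _ => Hnn _ (hξ0 x))
    have hGeq : ∀ v ∈ Set.Icc (0:ℝ) t, (∫ x in (0:ℝ)..v, g (ζ x)) = G1 v := by
      intro v hv
      refine intervalIntegral.integral_congr (fun x hx => ?_)
      rw [uIcc_of_le hv.1] at hx
      have hxt : x ∈ Set.Icc (0:ℝ) t := ⟨hx.1, hx.2.trans hv.2⟩
      rw [Hg (ζ x) (hζ0 x hxt), hξ, Set.indicator_of_mem hxt]
    have hG1lb : ∀ v ∈ Set.Icc (0:ℝ) r, c * (∫ x in (0:ℝ)..v, ξ x) - c*K*r ≤ G1 v := by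
      intro v hv
      have hlow : (∫ x in (0:ℝ)..v, (c * ξ x - c * K)) ≤ G1 v := by
        refine intervalIntegral.integral_mono_on hv.1 ?_ (hHξi.intervalIntegrable) ?_
        · exact ((hξi.intervalIntegrable).const_mul c).sub intervalIntegrable_const
        · intro x _
          have h1 := Hlb K hK0 (ξ x) (hξ0 x)
          have h2 : c * (ξ x - K) = c * ξ x - c * K := by ring
          rw [hcdef]
          linarith
      have hval : (∫ x in (0:ℝ)..v, (c * ξ x - c * K)) =
          c * (∫ x in (0:ℝ)..v, ξ x) - c*K*v := by
        rw [intervalIntegral.integral_sub ((hξi.intervalIntegrable).const_mul c)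
          intervalIntegrable_const, intervalIntegral.integral_const_mul,
          intervalIntegral.integral_const, smul_eq_mul]
        ring
      rw [hval] at hlow
      have hv' : c*K*v ≤ c*K*r := mul_le_mul_of_nonneg_left hv.2 (mul_nonneg hKp.le hK0)
      linarith
    have hint1 : IntervalIntegrable
        (fun v => Real.exp (-(∫ x in (0:ℝ)..v, g (ζ x))) * ζ v) volume 0 r := by
      rw [intervalIntegrable_iff_integrableOn_Ioc_of_le hr0.le]
      have hmes : Measurable (fun v => Real.exp (-(G1 v)) * ξ v) :=
        ((Real.continuous_exp.comp hG1c.neg).measurable).mul hξm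
      have hbase : IntegrableOn (fun v => Real.exp (-(G1 v)) * ξ v) (Set.Ioc 0 r) := by
        refine Integrable.mono' hξi.integrableOn hmes.aestronglyMeasurable.restrict ?_
        filter_upwards [ae_restrict_mem measurableSet_Ioc] with v hv
        rw [Real.norm_eq_abs, abs_mul, abs_of_nonneg (hξ0 v), abs_of_nonneg (Real.exp_pos _).le]
        have he : Real.exp (-(G1 v)) ≤ 1 :=
          Real.exp_le_one_iff.mpr (neg_nonpos.mpr (hG1nn v hv.1.le))
        nlinarith [hξ0 v]
      refine hbase.congr_fun ?_ measurableSet_Ioc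
      intro v hv
      have hvt : v ∈ Set.Icc (0:ℝ) t := ⟨hv.1.le, hv.2.trans hrt⟩
      show Real.exp (-(G1 v)) * ξ v = Real.exp (-(∫ x in (0:ℝ)..v, g (ζ x))) * ζ v
      rw [hGeq v hvt, hξ, Set.indicator_of_mem hvt]
    have hbase2 : IntervalIntegrable
        (fun v => Real.exp (-(c * ∫ x in (0:ℝ)..v, ξ x)) * ξ v) volume 0 r := by
      have hZ1c : Continuous (fun v => ∫ x in (0:ℝ)..v, ξ x) := hξi.continuous_primitive 0
      have hZ1nn : ∀ v, 0 ≤ v → 0 ≤ ∫ x in (0:ℝ)..v, ξ x := fun v hv =>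
        intervalIntegral.integral_nonneg hv (fun x _ => hξ0 x)
      rw [intervalIntegrable_iff_integrableOn_Ioc_of_le hr0.le]
      refine Integrable.mono' hξi.integrableOn
        (((Real.continuous_exp.comp
          ((continuous_const.mul hZ1c).neg)).measurable).mul hξm).aestronglyMeasurable.restrict ?_
      filter_upwards [ae_restrict_mem measurableSet_Ioc] with v hv
      rw [Real.norm_eq_abs, abs_mul, abs_of_nonneg (hξ0 v), abs_of_nonneg (Real.exp_pos _).le]
      have he : Real.exp (-(c * ∫ x in (0:ℝ)..v, ξ x)) ≤ 1 :=
        Real.exp_le_one_iff.mpr (by nlinarith [hZ1nn v hv.1.le, hKp])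
      nlinarith [hξ0 v]
    have hint2 : IntervalIntegrable
        (fun v => Real.exp (c*K*r) * (Real.exp (-(c * ∫ x in (0:ℝ)..v, ξ x)) * ξ v))
        volume 0 r := hbase2.const_mul _
    have hpt : ∀ v ∈ Set.Icc (0:ℝ) r, Real.exp (-(∫ x in (0:ℝ)..v, g (ζ x))) * ζ v ≤
        Real.exp (c*K*r) * (Real.exp (-(c * ∫ x in (0:ℝ)..v, ξ x)) * ξ v) := by
      intro v hv
      have hvt : v ∈ Set.Icc (0:ℝ) t := ⟨hv.1, hv.2.trans hrt⟩
      rw [hGeq v hvt]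
      have hζξv : ζ v = ξ v := by rw [hξ, Set.indicator_of_mem hvt]
      rw [hζξv, ← mul_assoc, ← Real.exp_add]
      refine mul_le_mul_of_nonneg_right (Real.exp_le_exp.mpr ?_) (hξ0 v)
      have := hG1lb v hv
      linarith
    calc (∫ v in (0:ℝ)..r, Real.exp (-(∫ x in (0:ℝ)..v, g (ζ x))) * ζ v)
        ≤ ∫ v in (0:ℝ)..r,
            Real.exp (c*K*r) * (Real.exp (-(c * ∫ x in (0:ℝ)..v, ξ x)) * ξ v) :=
          intervalIntegral.integral_mono_on hr0.le hint1 hint2 hpt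
      _ = Real.exp (c*K*r) *
            ∫ v in (0:ℝ)..r, Real.exp (-(c * ∫ x in (0:ℝ)..v, ξ x)) * ξ v :=
          intervalIntegral.integral_const_mul _ _
      _ ≤ Real.exp (c*K*r) * (3/c) := mul_le_mul_of_nonneg_left
          (core c r hKp hr0.le ξ hξm hξ0 hξi) (Real.exp_pos _).le
      _ = 3 * Real.exp (c*K*r) / c := by ring
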